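/- For every 0 < α ≤ 1, the Fermi relative speed v_F(σ₀) converges as σ₀ → ∞ to √π·Γ(1/(2α)+1/2)/(2α·Γ(1/(2α)+1)), and v_F(σ₀) is strictly less than this limit for every σ₀ ∈ (1,∞); hence this value is the least upper bound of the Fermi relative speeds of comoving test particles in the Robertson–Walker spacetime with scale factor a(t) = t^α. -/

import Mathlib

open Real MeasureTheory Filter Set intervalIntegral

noncomputable section

/-- The Fermi relative speed of a comoving test particle at parameter σ₀ in the
Robertson–Walker spacetime with scale factor a(t) = t^α. -/
def vFpow (α σ₀ : ℝ) : ℝ :=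
  (1 / (2 * α)) *
    ((∫ σ in (1:ℝ)..σ₀, σ ^ (-(1 / (2 * α) + 1)) / Real.sqrt (σ - 1)) +
      ((α - 1) / σ₀) * ∫ σ in (1:ℝ)..σ₀, σ ^ (-(1 / (2 * α))) / Real.sqrt (σ - 1))

lemma fermi_himg : (fun t : ℝ => t⁻¹) '' Ioo 0 1 = Ioi 1 := by
  ext x
  constructor
  · rintro ⟨t, ⟨ht0, ht1⟩, rfl⟩
    exact (one_lt_inv₀ ht0).2 ht1
  · intro hx
    have hx1 : (1:ℝ) < x := hx
    exact ⟨x⁻¹, ⟨inv_pos.2 (by linarith), inv_lt_one_of_one_lt₀ hx1⟩, inv_inv x⟩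

lemma fermi_hpoint {p : ℝ} {t : ℝ} (ht : t ∈ Ioo (0:ℝ) 1) :
    |(-(t^2)⁻¹)| • ((t⁻¹) ^ (-(p+1)) / Real.sqrt (t⁻¹ - 1)) =
      t ^ (p - 1/2) * (1 - t) ^ (-(1/2) : ℝ) := by
  obtain ⟨ht0, ht1⟩ := ht
  have h1t : (0:ℝ) < 1 - t := by linarith
  rw [smul_eq_mul, abs_neg, abs_inv, abs_pow, abs_of_pos ht0]
  have hsub : t⁻¹ - 1 = (1 - t) / t := by field_simp
  have e1 : (t⁻¹) ^ (-(p+1)) = t ^ (p+1) := by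
    rw [Real.inv_rpow ht0.le, Real.rpow_neg ht0.le, inv_inv]
  have e2 : Real.sqrt ((1-t)/t) = (1-t) ^ (1/2:ℝ) / t ^ (1/2:ℝ) := by
    rw [Real.sqrt_div h1t.le, Real.sqrt_eq_rpow, Real.sqrt_eq_rpow]
  have e3 : ((t^2)⁻¹ : ℝ) = t ^ (-2:ℝ) := by
    rw [← Real.rpow_natCast t 2, ← Real.rpow_neg ht0.le]
    norm_num
  rw [hsub, e1, e2, e3]
  have e4 : t ^ (-2:ℝ) * (t ^ (p+1) * t ^ (1/2:ℝ)) = t ^ (p - 1/2) := by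
    rw [← Real.rpow_add ht0, ← Real.rpow_add ht0]
    ring_nf
  have e5 : ((1-t) ^ (-(1/2):ℝ)) = ((1-t) ^ (1/2:ℝ))⁻¹ := by
    rw [← Real.rpow_neg h1t.le]
  rw [e5, ← e4]
  have hne : (1-t) ^ (1/2:ℝ) ≠ 0 := (Real.rpow_pos_of_pos h1t _).ne'
  have hne2 : t ^ (1/2:ℝ) ≠ 0 := (Real.rpow_pos_of_pos ht0 _).ne'
  field_simp

lemma fermi_betaCont {p : ℝ} : ContinuousOn
    (fun t : ℝ => t ^ (p - 1/2) * (1 - t) ^ (-(1/2):ℝ)) (Ioo (0:ℝ) 1) := by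
  apply ContinuousOn.mul
  · exact continuousOn_id.rpow_const fun x hx => Or.inl hx.1.ne'
  · exact (continuousOn_const.sub continuousOn_id).rpow_const
      fun x hx => Or.inl (by have := hx.2; intro h; simp at h; linarith)

lemma fermi_oneSubInt : IntervalIntegrable (fun t : ℝ => (1-t) ^ (-(1/2):ℝ)) volume 0 1 := by
  have h := (intervalIntegrable_rpow' (a := (0:ℝ)) (b := 1) (r := -(1/2))
    (by norm_num)).comp_sub_left 1
  simpa using h.symm

lemma fermi_betaInt {p : ℝ} (hp : 1/2 ≤ p) :
    IntegrableOn (fun t : ℝ => t ^ (p - 1/2) * (1 - t) ^ (-(1/2):ℝ)) (Ioo (0:ℝ) 1) := by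
  have h1 : IntegrableOn (fun t : ℝ => (1-t) ^ (-(1/2):ℝ)) (Ioo (0:ℝ) 1) :=
    (intervalIntegrable_iff_integrableOn_Ioo_of_le (by norm_num : (0:ℝ) ≤ 1)).1 fermi_oneSubInt
  refine Integrable.mono h1 (fermi_betaCont.aestronglyMeasurable measurableSet_Ioo) ?_
  filter_upwards [ae_restrict_mem measurableSet_Ioo] with t ht
  obtain ⟨ht0, ht1⟩ := ht
  have h1t : (0:ℝ) < 1 - t := by linarith
  have hb : 0 ≤ (1-t) ^ (-(1/2):ℝ) := (Real.rpow_pos_of_pos h1t _).le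
  rw [Real.norm_eq_abs, Real.norm_eq_abs, abs_of_nonneg hb,
    abs_of_nonneg (mul_nonneg (Real.rpow_nonneg ht0.le _) hb)]
  have : t ^ (p - 1/2) ≤ 1 := Real.rpow_le_one ht0.le ht1.le (by linarith)
  nlinarith

lemma fermi_realBeta {a b : ℝ} (ha : 0 < a) (hb : 0 < b) :
    ∫ t in (0:ℝ)..1, t ^ (a - 1) * (1 - t) ^ (b - 1) =
      Real.Gamma a * Real.Gamma b / Real.Gamma (a + b) := by
  have h := Complex.Gamma_mul_Gamma_eq_betaIntegral (s := (a : ℂ)) (t := (b : ℂ))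
    (by simpa using ha) (by simpa using hb)
  have key : Complex.betaIntegral a b =
      ((∫ t in (0:ℝ)..1, t ^ (a - 1) * (1 - t) ^ (b - 1) : ℝ) : ℂ) := by
    rw [Complex.betaIntegral, ← intervalIntegral.integral_ofReal]
    refine intervalIntegral.integral_congr fun x hx => ?_
    rw [uIcc_of_le (by norm_num)] at hx
    rw [Complex.ofReal_mul, Complex.ofReal_cpow hx.1, Complex.ofReal_cpow (by linarith [hx.2])]
    push_cast
    ring
  rw [key, ← Complex.ofReal_add, Complex.Gamma_ofReal, Complex.Gamma_ofReal,
    Complex.Gamma_ofReal, ← Complex.ofReal_mul, ← Complex.ofReal_mul] at h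
  have h' : Real.Gamma a * Real.Gamma b =
      Real.Gamma (a + b) * ∫ t in (0:ℝ)..1, t ^ (a - 1) * (1 - t) ^ (b - 1) :=
    mod_cast h
  rw [h']
  exact (mul_div_cancel_left₀ _ (Real.Gamma_pos_of_pos (by linarith)).ne').symm

lemma fermi_gIoi {p : ℝ} (hp : 1/2 ≤ p) :
    IntegrableOn (fun σ : ℝ => σ ^ (-(p+1)) / Real.sqrt (σ - 1)) (Ioi (1:ℝ)) ∧
    ∫ σ in Ioi (1:ℝ), σ ^ (-(p+1)) / Real.sqrt (σ - 1) =
      Real.sqrt π * Real.Gamma (p + 1/2) / Real.Gamma (p + 1) := by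
  have hd : ∀ x ∈ Ioo (0:ℝ) 1, HasDerivWithinAt (fun t : ℝ => t⁻¹) (-(x^2)⁻¹) (Ioo 0 1) x :=
    fun x hx => (hasDerivAt_inv hx.1.ne').hasDerivWithinAt
  have hinj : InjOn (fun t : ℝ => t⁻¹) (Ioo 0 1) := inv_injective.injOn
  have heq : EqOn (fun t : ℝ => |(-(t^2)⁻¹)| • ((t⁻¹) ^ (-(p+1)) / Real.sqrt (t⁻¹ - 1)))
      (fun t : ℝ => t ^ (p - 1/2) * (1 - t) ^ (-(1/2):ℝ)) (Ioo 0 1) :=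
    fun t ht => fermi_hpoint ht
  constructor
  · rw [← fermi_himg,
      integrableOn_image_iff_integrableOn_abs_deriv_smul measurableSet_Ioo hd hinj]
    exact ((fermi_betaInt hp).congr_fun heq.symm measurableSet_Ioo)
  · rw [← fermi_himg, integral_image_eq_integral_abs_deriv_smul measurableSet_Ioo hd hinj,
      setIntegral_congr_fun measurableSet_Ioo heq, ← integral_Ioc_eq_integral_Ioo,
      ← intervalIntegral.integral_of_le (by norm_num : (0:ℝ) ≤ 1)]
    have := fermi_realBeta (a := p + 1/2) (b := 1/2) (by linarith) (by norm_num)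
    rw [show p + 1/2 - 1 = p - 1/2 by ring, show (1/2 : ℝ) - 1 = -(1/2) by ring,
      show p + 1/2 + 1/2 = p + 1 by ring, Real.Gamma_one_half_eq] at this
    rw [this]
    ring

theorem fermi_speed_lub (α : ℝ) (hα0 : 0 < α) (hα1 : α ≤ 1) :
    Tendsto (vFpow α) atTop
      (nhds (Real.sqrt π * Real.Gamma (1 / (2 * α) + 1 / 2) /
        (2 * α * Real.Gamma (1 / (2 * α) + 1)))) ∧
    (∀ σ₀ ∈ Set.Ioi (1:ℝ),
      vFpow α σ₀ <
        Real.sqrt π * Real.Gamma (1 / (2 * α) + 1 / 2) /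
          (2 * α * Real.Gamma (1 / (2 * α) + 1))) ∧
    IsLUB (vFpow α '' Set.Ioi 1)
      (Real.sqrt π * Real.Gamma (1 / (2 * α) + 1 / 2) /
        (2 * α * Real.Gamma (1 / (2 * α) + 1))) := by
  have h2α : (0:ℝ) < 2 * α := by linarith
  set p : ℝ := 1 / (2 * α) with hpdef
  have hp : 1/2 ≤ p := by
    rw [hpdef, le_div_iff₀ h2α]
    linarith
  have hp0 : 0 < p := by linarith
  obtain ⟨hInt, hVal⟩ := fermi_gIoi hp
  -- I₂ bounds
  have hI2nonneg : ∀ σ₀ : ℝ, 1 ≤ σ₀ →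
      0 ≤ ∫ σ in (1:ℝ)..σ₀, σ ^ (-p) / Real.sqrt (σ - 1) := by
    intro σ₀ h1
    refine intervalIntegral.integral_nonneg h1 fun u hu => ?_
    exact div_nonneg (Real.rpow_nonneg (by linarith [hu.1]) _) (Real.sqrt_nonneg _)
  have hbase : ∀ σ₀ : ℝ, IntervalIntegrable
      (fun σ : ℝ => (σ - 1) ^ (-(1/2):ℝ)) volume 1 σ₀ := by
    intro σ₀
    have h := (intervalIntegrable_rpow' (a := (0:ℝ)) (b := σ₀ - 1) (r := -(1/2))
      (by norm_num)).comp_sub_right 1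
    simpa using h
  have hI2le : ∀ σ₀ : ℝ, 1 ≤ σ₀ →
      (∫ σ in (1:ℝ)..σ₀, σ ^ (-p) / Real.sqrt (σ - 1)) ≤ 2 * σ₀ ^ (1/2:ℝ) := by
    intro σ₀ h1
    have hIint : IntervalIntegrable (fun σ : ℝ => σ ^ (-p) / Real.sqrt (σ - 1)) volume 1 σ₀ := by
      refine (hbase σ₀).mono_fun ?_ ?_
      · apply ContinuousOn.aestronglyMeasurable ?_ measurableSet_uIoc
        rw [uIoc_of_le h1]
        apply ContinuousOn.div
        · exact continuousOn_id.rpow_const fun x hx => Or.inl (by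
            intro h; simp only [id_eq] at h; linarith [hx.1])
        · exact (Real.continuous_sqrt.comp (continuous_id.sub continuous_const)).continuousOn
        · intro x hx
          exact (Real.sqrt_pos.2 (by linarith [hx.1])).ne'
      · filter_upwards [ae_restrict_mem measurableSet_uIoc] with σ hσ
        rw [uIoc_of_le h1] at hσ
        obtain ⟨hσ1, _⟩ := hσ
        have hσ0 : (0:ℝ) < σ - 1 := by linarith
        have e : (σ - 1) ^ (-(1/2):ℝ) = (Real.sqrt (σ - 1))⁻¹ := by
          rw [Real.sqrt_eq_rpow, ← Real.rpow_neg hσ0.le]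
        rw [Real.norm_eq_abs, Real.norm_eq_abs, e,
          abs_of_nonneg (div_nonneg (Real.rpow_nonneg (by linarith) _) (Real.sqrt_nonneg _)),
          abs_of_nonneg (inv_nonneg.2 (Real.sqrt_nonneg _)), div_eq_mul_inv]
        have h1' : σ ^ (-p) ≤ 1 :=
          Real.rpow_le_one_of_one_le_of_nonpos (by linarith) (by linarith)
        have : (0:ℝ) ≤ (Real.sqrt (σ - 1))⁻¹ := inv_nonneg.2 (Real.sqrt_nonneg _)
        nlinarith
    have step1 : (∫ σ in (1:ℝ)..σ₀, σ ^ (-p) / Real.sqrt (σ - 1)) ≤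
        ∫ σ in (1:ℝ)..σ₀, (σ - 1) ^ (-(1/2):ℝ) := by
      refine intervalIntegral.integral_mono_on h1 hIint (hbase σ₀) fun σ hσ => ?_
      obtain ⟨hσ1, _⟩ := hσ
      rcases eq_or_lt_of_le hσ1 with h | h
      · rw [← h]
        simp
      · have hσ0 : (0:ℝ) < σ - 1 := by linarith
        have e : (σ - 1) ^ (-(1/2):ℝ) = (Real.sqrt (σ - 1))⁻¹ := by
          rw [Real.sqrt_eq_rpow, ← Real.rpow_neg hσ0.le]
        rw [e, div_eq_mul_inv]
        have h1' : σ ^ (-p) ≤ 1 :=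
          Real.rpow_le_one_of_one_le_of_nonpos (by linarith) (by linarith)
        have : (0:ℝ) ≤ (Real.sqrt (σ - 1))⁻¹ := inv_nonneg.2 (Real.sqrt_nonneg _)
        nlinarith
    have step2 : (∫ σ in (1:ℝ)..σ₀, (σ - 1) ^ (-(1/2):ℝ)) = 2 * (σ₀ - 1) ^ (1/2:ℝ) := by
      have hc : (∫ σ in (1:ℝ)..σ₀, (σ - 1) ^ (-(1/2):ℝ)) =
          ∫ x in (0:ℝ)..(σ₀ - 1), x ^ (-(1/2):ℝ) := by
        have := intervalIntegral.integral_comp_sub_right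
          (a := (1:ℝ)) (b := σ₀) (fun x : ℝ => x ^ (-(1/2):ℝ)) 1
        simpa using this
      rw [hc, integral_rpow (Or.inl (by norm_num))]
      rw [Real.zero_rpow (by norm_num)]
      ring
    have step3 : (2:ℝ) * (σ₀ - 1) ^ (1/2:ℝ) ≤ 2 * σ₀ ^ (1/2:ℝ) := by
      have := Real.rpow_le_rpow (by linarith : (0:ℝ) ≤ σ₀ - 1)
        (by linarith : σ₀ - 1 ≤ σ₀) (by norm_num : (0:ℝ) ≤ 1/2)
      linarith
    linarith [step1, step2.le, step2.ge, step3]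
  -- second term tends to zero
  have hT : Tendsto (fun σ₀ : ℝ => ((α - 1) / σ₀) *
      ∫ σ in (1:ℝ)..σ₀, σ ^ (-p) / Real.sqrt (σ - 1)) atTop (nhds 0) := by
    have hB : Tendsto (fun σ₀ : ℝ => 2 * (1 - α) * σ₀ ^ (-(1/2):ℝ)) atTop (nhds 0) := by
      have := (tendsto_rpow_neg_atTop (by norm_num : (0:ℝ) < 1/2)).const_mul (2 * (1 - α))
      simpa using this
    refine squeeze_zero_norm' ?_ hB
    filter_upwards [eventually_ge_atTop (1:ℝ)] with σ₀ h1
    have hσ0 : (0:ℝ) < σ₀ := by linarith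
    have hI2 := hI2nonneg σ₀ h1
    have hI2' := hI2le σ₀ h1
    rw [Real.norm_eq_abs, abs_mul, abs_div, abs_of_nonneg hI2,
      abs_of_pos hσ0, abs_of_nonpos (by linarith : α - 1 ≤ 0)]
    have hrw : σ₀ ^ (-(1/2):ℝ) = (σ₀ ^ (1/2:ℝ))⁻¹ := by
      rw [← Real.rpow_neg hσ0.le]
    rw [hrw]
    have hs : 0 < σ₀ ^ (1/2:ℝ) := Real.rpow_pos_of_pos hσ0 _
    have hss : σ₀ ^ (1/2:ℝ) * σ₀ ^ (1/2:ℝ) = σ₀ := by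
      rw [← Real.rpow_add hσ0]
      norm_num
    rw [div_mul_eq_mul_div, div_le_iff₀ hσ0]
    calc -(α - 1) * (∫ σ in (1:ℝ)..σ₀, σ ^ (-p) / Real.sqrt (σ - 1))
        ≤ (1 - α) * (2 * σ₀ ^ (1/2:ℝ)) := by
          have h1α : (0:ℝ) ≤ 1 - α := by linarith
          have : -(α - 1) = 1 - α := by ring
          rw [this]
          exact mul_le_mul_of_nonneg_left hI2' h1α
      _ = 2 * (1 - α) * (σ₀ ^ (1/2:ℝ))⁻¹ * σ₀ := by
          field_simp
          nlinarith [hss]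
  -- first term tends to the Beta value
  have hI1 : Tendsto (fun σ₀ : ℝ => ∫ σ in (1:ℝ)..σ₀, σ ^ (-(p+1)) / Real.sqrt (σ - 1)) atTop
      (nhds (Real.sqrt π * Real.Gamma (p + 1/2) / Real.Gamma (p + 1))) := by
    rw [← hVal]
    exact intervalIntegral_tendsto_integral_Ioi 1 hInt tendsto_id
  have hLeq : (1 / (2*α)) * (Real.sqrt π * Real.Gamma (p + 1/2) / Real.Gamma (p + 1) + 0) =
      Real.sqrt π * Real.Gamma (p + 1/2) / (2 * α * Real.Gamma (p + 1)) := by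
    field_simp
    ring
  have hvf : vFpow α = fun σ₀ : ℝ => (1 / (2*α)) *
      ((∫ σ in (1:ℝ)..σ₀, σ ^ (-(p+1)) / Real.sqrt (σ - 1)) +
        ((α - 1) / σ₀) * ∫ σ in (1:ℝ)..σ₀, σ ^ (-p) / Real.sqrt (σ - 1)) := by
    funext σ₀
    rw [vFpow, hpdef]
  have hmain : Tendsto (vFpow α) atTop
      (nhds (Real.sqrt π * Real.Gamma (p + 1/2) / (2 * α * Real.Gamma (p + 1)))) := by
    rw [hvf, ← hLeq]
    exact (hI1.add hT).const_mul _
  -- strict inequality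
  have hstrict : ∀ σ₀ ∈ Set.Ioi (1:ℝ), vFpow α σ₀ <
      Real.sqrt π * Real.Gamma (p + 1/2) / (2 * α * Real.Gamma (p + 1)) := by
    intro σ₀ hσ₀
    have hσ₀1 : (1:ℝ) < σ₀ := hσ₀
    have hle : (1:ℝ) ≤ σ₀ := hσ₀1.le
    have hkey : (∫ σ in (1:ℝ)..σ₀, σ ^ (-(p+1)) / Real.sqrt (σ - 1)) <
        ∫ σ in Ioi (1:ℝ), σ ^ (-(p+1)) / Real.sqrt (σ - 1) := by
      rw [intervalIntegral.integral_of_le hle]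
      have hsplit : (∫ σ in Ioi (1:ℝ), σ ^ (-(p+1)) / Real.sqrt (σ - 1)) =
          (∫ σ in Ioc (1:ℝ) σ₀, σ ^ (-(p+1)) / Real.sqrt (σ - 1)) +
          ∫ σ in Ioi σ₀, σ ^ (-(p+1)) / Real.sqrt (σ - 1) := by
        rw [← setIntegral_union (Ioc_disjoint_Ioi le_rfl) measurableSet_Ioi
          (hInt.mono_set Ioc_subset_Ioi_self) (hInt.mono_set (Ioi_subset_Ioi hle)),
          Ioc_union_Ioi_eq_Ioi hle]
      have hpos : 0 < ∫ σ in Ioi σ₀, σ ^ (-(p+1)) / Real.sqrt (σ - 1) := by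
        rw [setIntegral_pos_iff_support_of_nonneg_ae ?_ (hInt.mono_set (Ioi_subset_Ioi hle))]
        · refine lt_of_lt_of_le ?_ (measure_mono (subset_inter (fun σ hσ => ?_) subset_rfl))
          · rw [Real.volume_Ioi]
            norm_num
          · have hσ1 : (1:ℝ) < σ := lt_trans hσ₀1 hσ
            exact (div_pos (Real.rpow_pos_of_pos (by linarith) _)
              (Real.sqrt_pos.2 (by linarith))).ne'
        · filter_upwards [ae_restrict_mem measurableSet_Ioi] with σ hσ
          have hσ1 : (1:ℝ) < σ := lt_trans hσ₀1 hσ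
          exact (div_pos (Real.rpow_pos_of_pos (by linarith) _)
            (Real.sqrt_pos.2 (by linarith))).le
      linarith [hsplit]
    have hdiv : (α - 1) / σ₀ ≤ 0 := by
      rw [div_nonpos_iff]
      exact Or.inr ⟨by linarith, by linarith⟩
    have hsnd : ((α - 1) / σ₀) * (∫ σ in (1:ℝ)..σ₀, σ ^ (-p) / Real.sqrt (σ - 1)) ≤ 0 :=
      mul_nonpos_iff.2 (Or.inr ⟨hdiv, hI2nonneg σ₀ hle⟩)
    have h2αpos : (0:ℝ) < 1 / (2*α) := by positivity
    have : vFpow α σ₀ ≤ (1 / (2*α)) * ∫ σ in (1:ℝ)..σ₀, σ ^ (-(p+1)) / Real.sqrt (σ - 1) := by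
      rw [hvf]
      exact mul_le_mul_of_nonneg_left (by linarith) h2αpos.le
    calc vFpow α σ₀ ≤ (1 / (2*α)) * ∫ σ in (1:ℝ)..σ₀, σ ^ (-(p+1)) / Real.sqrt (σ - 1) := this
      _ < (1 / (2*α)) * ∫ σ in Ioi (1:ℝ), σ ^ (-(p+1)) / Real.sqrt (σ - 1) :=
          mul_lt_mul_of_pos_left hkey h2αpos
      _ = Real.sqrt π * Real.Gamma (p + 1/2) / (2 * α * Real.Gamma (p + 1)) := by
          rw [hVal, ← hLeq]
          ring
  refine ⟨hmain, hstrict, ?_, ?_⟩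
  · rintro x ⟨σ₀, hσ₀, rfl⟩
    exact (hstrict σ₀ hσ₀).le
  · intro b hb
    refine le_of_tendsto hmain ?_
    filter_upwards [eventually_gt_atTop (1:ℝ)] with σ₀ hσ₀
    exact hb ⟨σ₀, hσ₀, rfl⟩
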